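/- Let m1, m2, m3, m4, m5, n1, n2, n3, n4, n5 be real numbers and define p1 = m1² − 2m2 − n1², p2 = m2² + 2m4 − 2m1·m3 − n2² + 2n1·n3, p3 = m3² + 2m1·m5 − 2m2·m4 − 2n1·n5 + 2n2·n4 − n3², p4 = m4² − 2m3·m5 + 2n3·n5 − n4², p5 = m5² − n5². Suppose ω0 > 0 is a real number satisfying ω0^10 + p1·ω0^8 + p2·ω0^6 + p3·ω0^4 + p4·ω0² + p5 = 0 and (n1·ω0⁴ − n3·ω0² + n5)² + (n2·ω0³ − n4·ω0)² ≠ 0. Then there exists τ2 ≥ 0 such that ψ(iω0) = 0, where ψ(ξ) = ξ⁵ + m1·ξ⁴ + m2·ξ³ + m3·ξ² + m4·ξ + m5 + e^{−ξτ2}·(n1·ξ⁴ + n2·ξ³ + n3·ξ² + n4·ξ + n5). -/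

import Mathlib

lemma normSq_aux (a b : ℝ) :
    Complex.normSq ((a : ℂ) + (b : ℂ) * Complex.I) = a ^ 2 + b ^ 2 := by
  simp [Complex.normSq_apply]
  ring

theorem stmt13 (m1 m2 m3 m4 m5 n1 n2 n3 n4 n5 : ℝ)
    (p1 p2 p3 p4 p5 : ℝ)
    (hp1 : p1 = m1 ^ 2 - 2 * m2 - n1 ^ 2)
    (hp2 : p2 = m2 ^ 2 + 2 * m4 - 2 * m1 * m3 - n2 ^ 2 + 2 * n1 * n3)
    (hp3 : p3 = m3 ^ 2 + 2 * m1 * m5 - 2 * m2 * m4 - 2 * n1 * n5 + 2 * n2 * n4 - n3 ^ 2)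
    (hp4 : p4 = m4 ^ 2 - 2 * m3 * m5 + 2 * n3 * n5 - n4 ^ 2)
    (hp5 : p5 = m5 ^ 2 - n5 ^ 2)
    (ω0 : ℝ) (hω0 : 0 < ω0)
    (heq : ω0 ^ 10 + p1 * ω0 ^ 8 + p2 * ω0 ^ 6 + p3 * ω0 ^ 4 + p4 * ω0 ^ 2 + p5 = 0)
    (hne : (n1 * ω0 ^ 4 - n3 * ω0 ^ 2 + n5) ^ 2 + (n2 * ω0 ^ 3 - n4 * ω0) ^ 2 ≠ 0) :
    ∃ τ2 : ℝ, 0 ≤ τ2 ∧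
      ((ω0 : ℂ) * Complex.I) ^ 5 + (m1 : ℂ) * ((ω0 : ℂ) * Complex.I) ^ 4 +
        (m2 : ℂ) * ((ω0 : ℂ) * Complex.I) ^ 3 + (m3 : ℂ) * ((ω0 : ℂ) * Complex.I) ^ 2 +
        (m4 : ℂ) * ((ω0 : ℂ) * Complex.I) + (m5 : ℂ) +
        Complex.exp (-((ω0 : ℂ) * Complex.I) * (τ2 : ℂ)) *
          ((n1 : ℂ) * ((ω0 : ℂ) * Complex.I) ^ 4 + (n2 : ℂ) * ((ω0 : ℂ) * Complex.I) ^ 3 +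
            (n3 : ℂ) * ((ω0 : ℂ) * Complex.I) ^ 2 + (n4 : ℂ) * ((ω0 : ℂ) * Complex.I) +
            (n5 : ℂ)) = 0 := by
  set P : ℂ := ((ω0 : ℂ) * Complex.I) ^ 5 + (m1 : ℂ) * ((ω0 : ℂ) * Complex.I) ^ 4 +
        (m2 : ℂ) * ((ω0 : ℂ) * Complex.I) ^ 3 + (m3 : ℂ) * ((ω0 : ℂ) * Complex.I) ^ 2 +
        (m4 : ℂ) * ((ω0 : ℂ) * Complex.I) + (m5 : ℂ) with hP
  set Q : ℂ := (n1 : ℂ) * ((ω0 : ℂ) * Complex.I) ^ 4 + (n2 : ℂ) * ((ω0 : ℂ) * Complex.I) ^ 3 +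
            (n3 : ℂ) * ((ω0 : ℂ) * Complex.I) ^ 2 + (n4 : ℂ) * ((ω0 : ℂ) * Complex.I) +
            (n5 : ℂ) with hQ
  have hI2 : (Complex.I) ^ 2 = -1 := Complex.I_sq
  -- explicit real/imaginary decompositions
  have hQdec : Q = ((n1 * ω0 ^ 4 - n3 * ω0 ^ 2 + n5 : ℝ) : ℂ) +
      ((-(n2 * ω0 ^ 3 - n4 * ω0) : ℝ) : ℂ) * Complex.I := by
    rw [hQ]; push_cast
    linear_combination ((n1 : ℂ) * (ω0:ℂ)^4 * (Complex.I^2 - 1) + (n2:ℂ) * (ω0:ℂ)^3 * Complex.I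
      + (n3:ℂ) * (ω0:ℂ)^2) * hI2
  have hPdec : P = ((m1 * ω0 ^ 4 - m3 * ω0 ^ 2 + m5 : ℝ) : ℂ) +
      ((ω0 ^ 5 - m2 * ω0 ^ 3 + m4 * ω0 : ℝ) : ℂ) * Complex.I := by
    rw [hP]; push_cast
    linear_combination ((ω0:ℂ)^5 * Complex.I * (Complex.I^2 - 1) +
      (m1 : ℂ) * (ω0:ℂ)^4 * (Complex.I^2 - 1) + (m2:ℂ) * (ω0:ℂ)^3 * Complex.I
      + (m3:ℂ) * (ω0:ℂ)^2) * hI2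
  have hQns : Complex.normSq Q = (n1 * ω0 ^ 4 - n3 * ω0 ^ 2 + n5) ^ 2 +
      (n2 * ω0 ^ 3 - n4 * ω0) ^ 2 := by
    rw [hQdec, normSq_aux]; ring
  have hPns : Complex.normSq P = (m1 * ω0 ^ 4 - m3 * ω0 ^ 2 + m5) ^ 2 +
      (ω0 ^ 5 - m2 * ω0 ^ 3 + m4 * ω0) ^ 2 := by
    rw [hPdec, normSq_aux]
  have hQ0 : Q ≠ 0 := by
    intro h
    apply hne
    rw [← hQns, h, Complex.normSq_zero]
  have hns : Complex.normSq P = Complex.normSq Q := by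
    rw [hPns, hQns]
    subst hp1 hp2 hp3 hp4 hp5
    linear_combination heq
  have habs : ‖-P / Q‖ = 1 := by
    rw [norm_div, norm_neg]
    rw [div_eq_one_iff_eq (by simpa using hQ0)]
    rw [Complex.norm_def, Complex.norm_def]
    simp [hns]
  set θ := Complex.arg (-P / Q) with hθ
  refine ⟨(2 * Real.pi - θ) / ω0, ?_, ?_⟩
  · apply div_nonneg _ hω0.le
    have := Complex.arg_le_pi (-P / Q)
    have hπ := Real.pi_pos
    linarith
  · have hz : Complex.exp (-((ω0 : ℂ) * Complex.I) * (((2 * Real.pi - θ) / ω0 : ℝ) : ℂ)) =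
        -P / Q := by
      have hω0' : (ω0 : ℂ) ≠ 0 := by exact_mod_cast hω0.ne'
      have h1 : -((ω0 : ℂ) * Complex.I) * (((2 * Real.pi - θ) / ω0 : ℝ) : ℂ) =
          (θ : ℂ) * Complex.I - 2 * Real.pi * Complex.I := by
        push_cast
        field_simp
        ring
      rw [h1, Complex.exp_sub, Complex.exp_two_pi_mul_I]
      rw [div_one]
      conv_rhs => rw [← Complex.norm_mul_exp_arg_mul_I (-P / Q)]
      rw [habs, ← hθ]
      simp
    rw [hz]
    field_simp
    ring
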